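/- Consider the WARM triangle graph with 1 < α < 4/3. If (v_1, v_2, v_3) ∈ Δ_3 is an equilibrium with v_1 ≥ v_2 ≥ v_3 > 0, then v_1 = v_2. -/

import Mathlib

open Finset

noncomputable section

/-- Membership in the simplex `Δ`. -/
def InSimplex {ι : Type*} [Fintype ι] (v : ι → ℝ) : Prop :=
  (∀ i, 0 ≤ v i) ∧ ∑ i, v i = 1

/-- A WARM weight: a probability distribution on the subsets of the colour set,
giving no mass to the empty set. -/
def IsWarmWeight {ι : Type*} [Fintype ι] [DecidableEq ι] (p : Finset ι → ℝ) : Prop :=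
  p ∅ = 0 ∧ (∀ A, 0 ≤ p A ∧ p A ≤ 1) ∧ ∑ A : Finset ι, p A = 1

/-- The WARM vector field `F`. -/
def warmF {ι : Type*} [Fintype ι] [DecidableEq ι] (α : ℝ) (p : Finset ι → ℝ)
    (v : ι → ℝ) (i : ι) : ℝ :=
  -v i + ∑ A ∈ Finset.univ.filter (fun A : Finset ι => i ∈ A),
      p A * v i ^ α / (∑ j ∈ A, v j ^ α)

/-- The Jacobian matrix `D(v)`. -/
def warmD {ι : Type*} [Fintype ι] [DecidableEq ι] (α : ℝ) (p : Finset ι → ℝ)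
    (v : ι → ℝ) : Matrix ι ι ℝ :=
  Matrix.of fun i k =>
    if i = k then
      -1 + α * v i ^ (α - 1) *
        ∑ A ∈ Finset.univ.filter (fun A : Finset ι => i ∈ A),
          p A * ((∑ j ∈ A, v j ^ α) - v i ^ α) / (∑ j ∈ A, v j ^ α) ^ 2
    else
      -(α * v k ^ (α - 1) * v i ^ α *
        ∑ A ∈ Finset.univ.filter (fun A : Finset ι => i ∈ A ∧ k ∈ A),
          p A / (∑ j ∈ A, v j ^ α) ^ 2)

/-- `μ ∈ ℂ` is an eigenvalue of the real matrix `M`, i.e. a root of its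
characteristic polynomial. -/
def IsEigenvalue {ι : Type*} [Fintype ι] [DecidableEq ι] (M : Matrix ι ι ℝ) (μ : ℂ) : Prop :=
  (M.charpoly.map (algebraMap ℝ ℂ)).IsRoot μ

/-- Linear stability: every complex eigenvalue has negative real part. -/
def LinStable {ι : Type*} [Fintype ι] [DecidableEq ι] (M : Matrix ι ι ℝ) : Prop :=
  ∀ μ : ℂ, IsEigenvalue M μ → μ.re < 0

/-- Linear instability: some eigenvalue has positive real part. -/
def LinUnstable {ι : Type*} [Fintype ι] [DecidableEq ι] (M : Matrix ι ι ℝ) : Prop :=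
  ∃ μ : ℂ, IsEigenvalue M μ ∧ 0 < μ.re

/-- Critical: neither linearly stable nor linearly unstable. -/
def CriticalPt {ι : Type*} [Fintype ι] [DecidableEq ι] (M : Matrix ι ι ℝ) : Prop :=
  ¬ LinStable M ∧ ¬ LinUnstable M


/-- The WARM triangle graph weight: each of the three two-element subsets of `[3]` gets
mass `1/3`. -/
def ptri : Finset (Fin 3) → ℝ := fun A => if A.card = 2 then 1 / 3 else 0

open Set in
private lemma bern {α u : ℝ} (hα : 1 < α) (hu : 0 < u) (hne : u ≠ 1) :
    0 < u ^ α - α * u + (α - 1) := by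
  have h := one_add_mul_self_lt_rpow_one_add (s := u - 1) (by linarith) (by
    intro h; exact hne (by linarith)) hα
  rw [show (1 : ℝ) + (u - 1) = u by ring] at h
  nlinarith [h]

/-- derivative of g(u) = (u^α - 1)/(u^(α-1) - 1) -/
lemma gderiv {α u : ℝ} (hα : 1 < α) (hu : 0 < u) (hne : u ^ (α-1) ≠ 1) :
    HasDerivAt (fun u : ℝ => (u ^ α - 1) / (u ^ (α-1) - 1))
      (u ^ (α-2) * (u ^ α - α * u + (α-1)) / (u ^ (α-1) - 1)^2) u := by
  have hN : HasDerivAt (fun u : ℝ => u ^ α - 1) (α * u ^ (α-1)) u :=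
    (Real.hasDerivAt_rpow_const (Or.inl hu.ne')).sub_const 1
  have hD : HasDerivAt (fun u : ℝ => u ^ (α-1) - 1) ((α-1) * u ^ (α-1-1)) u :=
    (Real.hasDerivAt_rpow_const (Or.inl hu.ne')).sub_const 1
  have hden : u ^ (α-1) - 1 ≠ 0 := sub_ne_zero.2 hne
  have h := hN.div hD hden
  refine h.congr_deriv ?_
  have e1 : u ^ (α-1) = u ^ (α-2) * u := by
    rw [← Real.rpow_add_one hu.ne' (α-2)]; ring_nf
  have e2 : u ^ α = u ^ (α-2) * u * u := by
    rw [← Real.rpow_add_one hu.ne' (α-2), ← Real.rpow_add_one hu.ne' (α-2+1)]; ring_nf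
  have e3 : u ^ (α-1-1) = u ^ (α-2) := by rw [show α-1-1 = α-2 by ring]
  rw [e3]
  field_simp
  rw [e1, e2]
  ring

open Set in
private lemma gcont {α : ℝ} (hα : 1 < α) {s : Set ℝ} (hs : ∀ u ∈ s, 0 < u ∧ u ^ (α-1) ≠ 1) :
    ContinuousOn (fun u : ℝ => (u ^ α - 1) / (u ^ (α-1) - 1)) s := by
  apply ContinuousOn.div
  · exact (continuousOn_id.rpow_const (fun u hu => Or.inl (hs u hu).1.ne')).sub continuousOn_const
  · exact (continuousOn_id.rpow_const (fun u hu => Or.inl (hs u hu).1.ne')).sub continuousOn_const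
  · exact fun u hu => sub_ne_zero.2 (hs u hu).2

open Set in
private lemma gmono_Ioi {α : ℝ} (hα : 1 < α) :
    StrictMonoOn (fun u : ℝ => (u ^ α - 1) / (u ^ (α-1) - 1)) (Ioi 1) := by
  have key : ∀ u ∈ Set.Ioi (1:ℝ), 0 < u ∧ u ^ (α-1) ≠ 1 := by
    intro u hu
    have hu1 : (1:ℝ) < u := hu
    exact ⟨by linarith, ne_of_gt ((Real.one_lt_rpow_iff_of_pos (by linarith)).2 (Or.inl ⟨hu1, by linarith⟩))⟩
  apply strictMonoOn_of_deriv_pos (convex_Ioi 1) (gcont hα key)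
  intro u hu
  rw [interior_Ioi] at hu
  have hu1 : (1:ℝ) < u := hu
  have h0 : (0:ℝ) < u := by linarith
  rw [(gderiv hα h0 (key u hu).2).deriv]
  have h1 : 0 < u ^ (α-2) := Real.rpow_pos_of_pos h0 _
  have h2 : 0 < u ^ α - α * u + (α-1) := bern hα h0 (by linarith)
  have h3 : (0:ℝ) < (u ^ (α-1) - 1)^2 := by
    exact pow_two_pos_of_ne_zero (sub_ne_zero.2 (key u hu).2)
  positivity

open Set in
private lemma gmono_Ioo {α : ℝ} (hα : 1 < α) :
    StrictMonoOn (fun u : ℝ => (u ^ α - 1) / (u ^ (α-1) - 1)) (Ioo 0 1) := by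
  have key : ∀ u ∈ Set.Ioo (0:ℝ) 1, 0 < u ∧ u ^ (α-1) ≠ 1 := by
    intro u hu
    exact ⟨hu.1, ne_of_lt (Real.rpow_lt_one hu.1.le hu.2 (by linarith))⟩
  apply strictMonoOn_of_deriv_pos (convex_Ioo 0 1) (gcont hα key)
  intro u hu
  rw [interior_Ioo] at hu
  rw [(gderiv hα hu.1 (key u hu).2).deriv]
  have h1 : 0 < u ^ (α-2) := Real.rpow_pos_of_pos hu.1 _
  have h2 : 0 < u ^ α - α * u + (α-1) := bern hα hu.1 (ne_of_lt hu.2)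
  have h3 : (0:ℝ) < (u ^ (α-1) - 1)^2 := by
    exact pow_two_pos_of_ne_zero (sub_ne_zero.2 (key u hu).2)
  positivity

open Set in
private lemma rfun_eq {α u : ℝ} :
    (u ^ α - 1) * u ^ (α-1) / (u ^ (α-1) - 1)
      = u ^ (α-1) * ((u ^ α - 1) / (u ^ (α-1) - 1)) := by
  ring

open Set in
private lemma mulmono {f g : ℝ → ℝ} {s : Set ℝ} (hf : StrictMonoOn f s) (hg : StrictMonoOn g s)
    (hf0 : ∀ x ∈ s, 0 < f x) (hg0 : ∀ x ∈ s, 0 < g x) :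
    StrictMonoOn (fun u => f u * g u) s := by
  intro a ha b hb hab
  exact mul_lt_mul'' (hf ha hb hab) (hg ha hb hab) (hf0 a ha).le (hg0 a ha).le

open Set in
private lemma rmono_Ioi {α : ℝ} (hα : 1 < α) :
    StrictMonoOn (fun u : ℝ => (u ^ α - 1) * u ^ (α-1) / (u ^ (α-1) - 1)) (Ioi 1) := by
  have h := mulmono (f := fun u : ℝ => u ^ (α-1))
      (g := fun u : ℝ => (u ^ α - 1) / (u ^ (α-1) - 1)) (s := Ioi 1)
      (fun a ha b hb hab => Real.rpow_lt_rpow (by simp at ha; linarith) hab (by linarith))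
      (gmono_Ioi hα)
      (fun u hu => Real.rpow_pos_of_pos (by simp at hu; linarith) _)
      (fun u hu => by
        have hu1 : (1:ℝ) < u := hu
        have h1 : (1:ℝ) < u ^ α := (Real.one_lt_rpow_iff_of_pos (by linarith)).2 (Or.inl ⟨hu1, by linarith⟩)
        have h2 : (1:ℝ) < u ^ (α-1) := (Real.one_lt_rpow_iff_of_pos (by linarith)).2 (Or.inl ⟨hu1, by linarith⟩)
        exact div_pos (by linarith) (by linarith))
  intro a ha b hb hab
  simpa only [rfun_eq] using h ha hb hab

open Set in
private lemma rmono_Ioo {α : ℝ} (hα : 1 < α) :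
    StrictMonoOn (fun u : ℝ => (u ^ α - 1) * u ^ (α-1) / (u ^ (α-1) - 1)) (Ioo 0 1) := by
  have h := mulmono (f := fun u : ℝ => u ^ (α-1))
      (g := fun u : ℝ => (u ^ α - 1) / (u ^ (α-1) - 1)) (s := Ioo 0 1)
      (fun a ha b hb hab => Real.rpow_lt_rpow ha.1.le hab (by linarith))
      (gmono_Ioo hα)
      (fun u hu => Real.rpow_pos_of_pos hu.1 _)
      (fun u hu => by
        have h1 : u ^ α < 1 := Real.rpow_lt_one hu.1.le hu.2 (by linarith)
        have h2 : u ^ (α-1) < 1 := Real.rpow_lt_one hu.1.le hu.2 (by linarith)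
        rw [div_pos_iff]
        exact Or.inr ⟨by linarith, by linarith⟩)
  intro a ha b hb hab
  simpa only [rfun_eq] using h ha hb hab

open Set in
private lemma ident1 {α s t : ℝ} (hα : 1 < α) (ht : 0 < t) (hts : t < s) :
    (s ^ α - t ^ α) / (t ^ (1-α) - s ^ (1-α))
      = t ^ (α+(α-1)) * (((s/t) ^ α - 1) * (s/t) ^ (α-1) / ((s/t) ^ (α-1) - 1)) := by
  have hs : 0 < s := ht.trans hts
  rw [Real.div_rpow hs.le ht.le, Real.div_rpow hs.le ht.le, Real.rpow_add ht α (α-1),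
    show (1-α) = -(α-1) by ring, Real.rpow_neg hs.le, Real.rpow_neg ht.le]
  have h1 : t ^ (α-1) < s ^ (α-1) := Real.rpow_lt_rpow ht.le hts (by linarith)
  have hC : 0 < s ^ (α-1) := Real.rpow_pos_of_pos hs _
  have hD : 0 < t ^ (α-1) := Real.rpow_pos_of_pos ht _
  have hB : 0 < t ^ α := Real.rpow_pos_of_pos ht _
  set A := s ^ α
  set B := t ^ α
  set C := s ^ (α-1)
  set D := t ^ (α-1)
  have hinv : C⁻¹ < D⁻¹ := inv_strictAnti₀ hD h1
  have hne1 : D⁻¹ - C⁻¹ ≠ 0 := ne_of_gt (by linarith)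
  have hCD : C - D ≠ 0 := sub_ne_zero.2 h1.ne'
  rw [inv_sub_inv hD.ne' hC.ne', div_sub_one hB.ne', div_sub_one hD.ne']
  field_simp

open Set in
private lemma ident2 {α s t : ℝ} (hα : 1 < α) (ht : 0 < t) (hts : t < s) :
    (s ^ α - t ^ α) / (t ^ (1-α) - s ^ (1-α))
      = s ^ (α+(α-1)) * (((t/s) ^ α - 1) * (t/s) ^ (α-1) / ((t/s) ^ (α-1) - 1)) := by
  have hs : 0 < s := ht.trans hts
  rw [Real.div_rpow ht.le hs.le, Real.div_rpow ht.le hs.le, Real.rpow_add hs α (α-1),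
    show (1-α) = -(α-1) by ring, Real.rpow_neg hs.le, Real.rpow_neg ht.le]
  have h1 : t ^ (α-1) < s ^ (α-1) := Real.rpow_lt_rpow ht.le hts (by linarith)
  have hC : 0 < s ^ (α-1) := Real.rpow_pos_of_pos hs _
  have hD : 0 < t ^ (α-1) := Real.rpow_pos_of_pos ht _
  have hA : 0 < s ^ α := Real.rpow_pos_of_pos hs _
  set A := s ^ α
  set B := t ^ α
  set C := s ^ (α-1)
  set D := t ^ (α-1)
  have hinv : C⁻¹ < D⁻¹ := inv_strictAnti₀ hD h1
  have hne1 : D⁻¹ - C⁻¹ ≠ 0 := ne_of_gt (by linarith)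
  have hDC : D - C ≠ 0 := sub_ne_zero.2 h1.ne
  have hCD : C - D ≠ 0 := sub_ne_zero.2 h1.ne'
  rw [inv_sub_inv hD.ne' hC.ne', div_sub_one hA.ne', div_sub_one hC.ne']
  rw [div_div_eq_mul_div, div_div_eq_mul_div]
  field_simp
  ring

open Set in
private lemma keylem {α x y z : ℝ} (hα : 1 < α) (hz : 0 < z) (hzy : z < y) (hyx : y < x) :
    (y ^ α - z ^ α) * (y ^ (1-α) - x ^ (1-α)) < (x ^ α - y ^ α) * (z ^ (1-α) - y ^ (1-α)) := by
  have hy : 0 < y := hz.trans hzy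
  have hx : 0 < x := hy.trans hyx
  have hd1 : 0 < z ^ (1-α) - y ^ (1-α) := by
    have := Real.rpow_lt_rpow_of_neg hz hzy (show (1-α) < 0 by linarith); linarith
  have hd2 : 0 < y ^ (1-α) - x ^ (1-α) := by
    have := Real.rpow_lt_rpow_of_neg hy hyx (show (1-α) < 0 by linarith); linarith
  rw [← div_lt_div_iff₀ hd1 hd2]
  calc (y ^ α - z ^ α) / (z ^ (1-α) - y ^ (1-α))
      = z ^ (α+(α-1)) * (((y/z) ^ α - 1) * (y/z) ^ (α-1) / ((y/z) ^ (α-1) - 1)) :=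
        ident1 hα hz hzy
    _ < z ^ (α+(α-1)) * (((x/z) ^ α - 1) * (x/z) ^ (α-1) / ((x/z) ^ (α-1) - 1)) := by
        apply mul_lt_mul_of_pos_left _ (Real.rpow_pos_of_pos hz _)
        exact rmono_Ioi hα (Set.mem_Ioi.2 ((one_lt_div hz).2 hzy))
          (Set.mem_Ioi.2 ((one_lt_div hz).2 (hzy.trans hyx)))
          ((div_lt_div_iff_of_pos_right hz).2 hyx)
    _ = (x ^ α - z ^ α) / (z ^ (1-α) - x ^ (1-α)) := (ident1 hα hz (hzy.trans hyx)).symm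
    _ = x ^ (α+(α-1)) * (((z/x) ^ α - 1) * (z/x) ^ (α-1) / ((z/x) ^ (α-1) - 1)) :=
        ident2 hα hz (hzy.trans hyx)
    _ < x ^ (α+(α-1)) * (((y/x) ^ α - 1) * (y/x) ^ (α-1) / ((y/x) ^ (α-1) - 1)) := by
        apply mul_lt_mul_of_pos_left _ (Real.rpow_pos_of_pos hx _)
        apply rmono_Ioo hα (Set.mem_Ioo.2 ⟨div_pos hz hx, (div_lt_one hx).2 (hzy.trans hyx)⟩)
          (Set.mem_Ioo.2 ⟨div_pos hy hx, (div_lt_one hx).2 hyx⟩)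
        exact (div_lt_div_iff_of_pos_right hx).2 hzy
    _ = (x ^ α - y ^ α) / (y ^ (1-α) - x ^ (1-α)) := (ident2 hα hy hyx).symm

open Set in
private lemma polylem {w B : ℝ} (hB : 1 < B) (h3 : B^3 < w) :
    6*(w*B+1)*(B-1) < B*(w*B-1)*(w+2) := by
  have key : B*(w*B-1)*(w+2) - 6*(w*B+1)*(B-1)
      = (B-1)^2*(B^6+2*B^5+3*B^4+2*B^2+4*B+6)
        + (w-B^3)*(B*(2*(B^2-1)^2 + (2*B-1)^2 + 2)) + (w-B^3)^2*B^2 := by ring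
  have hB0 : (0:ℝ) < B := by linarith
  have hP : 0 < B^6+2*B^5+3*B^4+2*B^2+4*B+6 := by
    nlinarith [pow_pos hB0 6, pow_pos hB0 5, pow_pos hB0 4, pow_pos hB0 2, hB0]
  have t1 : 0 < (B-1)^2*(B^6+2*B^5+3*B^4+2*B^2+4*B+6) :=
    mul_pos (pow_pos (by linarith) 2) hP
  have t2 : 0 < (w-B^3)*(B*(2*(B^2-1)^2 + (2*B-1)^2 + 2)) := by
    apply mul_pos (by linarith)
    apply mul_pos hB0
    positivity
  have t3 : 0 ≤ (w-B^3)^2*B^2 := by positivity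
  linarith

open Set in
private lemma mainlem {α x y z : ℝ} (hα1 : 1 < α) (hα2 : α < 4/3) (hz : 0 < z) (hzy : z ≤ y)
    (hyx : y < x) (hsum : x + y + z = 1)
    (h0 : 3*(x^(1-α))*((x^α+y^α)*(x^α+z^α)) = 2*x^α+y^α+z^α)
    (h1 : 3*(y^(1-α))*((x^α+y^α)*(y^α+z^α)) = x^α+2*y^α+z^α)
    (h2 : 3*(z^(1-α))*((x^α+z^α)*(y^α+z^α)) = x^α+y^α+2*z^α) : False := by
  have hy : 0 < y := lt_of_lt_of_le hz hzy
  have hx : 0 < x := lt_trans hy hyx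
  have ha : 0 < x ^ α := Real.rpow_pos_of_pos hx α
  have hb : 0 < y ^ α := Real.rpow_pos_of_pos hy α
  have hc : 0 < z ^ α := Real.rpow_pos_of_pos hz α
  have hI01 : 3*(y^(1-α)-x^(1-α))*((x^α+z^α)*(y^α+z^α)) = x^α - y^α := by
    apply mul_right_cancel₀ (show x^α+y^α ≠ 0 from ne_of_gt (by linarith))
    linear_combination (x^α+z^α)*h1 - (y^α+z^α)*h0
  rcases eq_or_lt_of_le hzy with heq | hlt
  · -- z = y : polynomial case
    subst heq
    have hw0 : 0 < x/z := div_pos hx hz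
    have hw1 : 1 < x/z := (one_lt_div hz).2 hyx
    have hB1 : 1 < (x/z)^(α-1) :=
      (Real.one_lt_rpow_iff_of_pos hw0).2 (Or.inl ⟨hw1, by linarith⟩)
    have hB3 : ((x/z)^(α-1))^(3:ℕ) < x/z := by
      have e : ((x/z)^(α-1))^(3:ℕ) = (x/z)^((α-1)*3) := by
        rw [← Real.rpow_natCast ((x/z)^(α-1)) 3, ← Real.rpow_mul hw0.le]
        norm_num
      rw [e]
      calc (x/z)^((α-1)*3) < (x/z)^(1:ℝ) :=
            Real.rpow_lt_rpow_of_exponent_lt hw1 (by linarith)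
        _ = x/z := Real.rpow_one _
    have hwx : z*(x/z) = x := by field_simp
    have hwa : (x/z)^α = (x/z)*(x/z)^(α-1) := by
      have h := Real.rpow_add hw0 1 (α-1)
      rw [show (1:ℝ)+(α-1) = α by ring, Real.rpow_one] at h
      exact h
    have haw : x^α = z^α*((x/z)*(x/z)^(α-1)) := by
      calc x^α = (z*(x/z))^α := by rw [hwx]
        _ = z^α*(x/z)^α := Real.mul_rpow hz.le hw0.le
        _ = z^α*((x/z)*(x/z)^(α-1)) := by rw [hwa]
    have hXB : x^(1-α)*(x/z)^(α-1) = z^(1-α) := by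
      calc x^(1-α)*(x/z)^(α-1) = (z*(x/z))^(1-α)*(x/z)^(α-1) := by rw [hwx]
        _ = z^(1-α)*((x/z)^(1-α)*(x/z)^(α-1)) := by
            rw [Real.mul_rpow hz.le hw0.le]; ring
        _ = z^(1-α) := by
            rw [← Real.rpow_add hw0, show (1-α)+(α-1) = 0 by ring, Real.rpow_zero, mul_one]
    have hYb : z^(1-α)*z^α = z := by
      rw [← Real.rpow_add hz, show (1-α)+α = 1 by ring, Real.rpow_one]
    have hy2 : z*((x/z)+2) = 1 := by
      field_simp
      linarith
    have step0 : 6*(z^(1-α)-x^(1-α))*(z^α)^2*((x/z)*(x/z)^(α-1)+1)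
        = z^α*((x/z)*(x/z)^(α-1)-1) := by
      linear_combination hI01 + (1 - 6*(z^(1-α)-x^(1-α))*z^α)*haw
    have step1 : 6*z*((x/z)^(α-1)-1)*z^α*((x/z)*(x/z)^(α-1)+1)
        = (x/z)^(α-1)*z^α*((x/z)*(x/z)^(α-1)-1) := by
      linear_combination (x/z)^(α-1)*step0
        - 6*(z^α)*((x/z)*(x/z)^(α-1)+1)*((x/z)^(α-1)-1)*hYb
        + 6*(z^α)^2*((x/z)*(x/z)^(α-1)+1)*hXB
    have step2 : 6*((x/z)^(α-1)-1)*((x/z)*(x/z)^(α-1)+1)*z^α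
        = (x/z)^(α-1)*((x/z)*(x/z)^(α-1)-1)*((x/z)+2)*z^α := by
      linear_combination ((x/z)+2)*step1
        - 6*((x/z)^(α-1)-1)*((x/z)*(x/z)^(α-1)+1)*z^α*hy2
    have hfin : 6*((x/z)^(α-1)-1)*((x/z)*(x/z)^(α-1)+1)
        = (x/z)^(α-1)*((x/z)*(x/z)^(α-1)-1)*((x/z)+2) :=
      mul_right_cancel₀ hb.ne' step2
    have hpoly := polylem hB1 hB3
    linarith [hfin, hpoly]
  · -- z < y
    have hI12 : 3*(z^(1-α)-y^(1-α))*((x^α+y^α)*(x^α+z^α)) = y^α - z^α := by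
      apply mul_right_cancel₀ (show y^α+z^α ≠ 0 from ne_of_gt (by linarith))
      linear_combination (x^α+y^α)*h2 - (x^α+z^α)*h1
    have K := keylem hα1 hz hlt hyx
    have hdY : 0 < y^(1-α) - x^(1-α) := by
      have := Real.rpow_lt_rpow_of_neg hy hyx (show (1-α) < 0 by linarith); linarith
    have hdZ : 0 < z^(1-α) - y^(1-α) := by
      have := Real.rpow_lt_rpow_of_neg hz hlt (show (1-α) < 0 by linarith); linarith
    rw [← hI12, ← hI01] at K
    have hp : 0 < (z^(1-α)-y^(1-α))*(y^(1-α)-x^(1-α)) := mul_pos hdZ hdY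
    have hQ : (x^α+y^α)*(x^α+z^α) < (x^α+z^α)*(y^α+z^α) := by nlinarith [K, hp]
    have hca : z^α < x^α := Real.rpow_lt_rpow hz.le (lt_trans hlt hyx) (by linarith)
    nlinarith [hQ, hca, ha, hb, hc]

/-- **Triangle graph, `1 < α < 4/3`.** Every equilibrium `(v₁,v₂,v₃)` with
`v₁ ≥ v₂ ≥ v₃ > 0` satisfies `v₁ = v₂`. -/
theorem triangle_top_two_equal_of_small_alpha (α : ℝ) (hα1 : 1 < α) (hα2 : α < 4 / 3)
    (v : Fin 3 → ℝ) (hv : InSimplex v) (heq : ∀ i, warmF α ptri v i = 0)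
    (h21 : v 1 ≤ v 0) (h32 : v 2 ≤ v 1) (h3 : 0 < v 2) :
    v 0 = v 1 := by
  rcases eq_or_lt_of_le h21 with he | hyx
  · exact he.symm
  exfalso
  have hz : 0 < v 2 := h3
  have hy : 0 < v 1 := lt_of_lt_of_le hz h32
  have hx : 0 < v 0 := lt_trans hy hyx
  have ha : 0 < v 0 ^ α := Real.rpow_pos_of_pos hx α
  have hb : 0 < v 1 ^ α := Real.rpow_pos_of_pos hy α
  have hc : 0 < v 2 ^ α := Real.rpow_pos_of_pos hz α
  have hsum : v 0 + v 1 + v 2 = 1 := by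
    have := hv.2
    rwa [Fin.sum_univ_three] at this
  -- extract the three equations
  have h0fr : v 0 = 1/3 * (v 0 ^ α / (v 0 ^ α + v 1 ^ α)) + 1/3 * (v 0 ^ α / (v 0 ^ α + v 2 ^ α)) := by
    have h := heq 0
    rw [warmF] at h
    rw [show (Finset.univ.filter (fun A : Finset (Fin 3) => (0:Fin 3) ∈ A))
        = {{0},{0,1},{0,2},{0,1,2}} from by decide] at h
    simp only [Finset.sum_insert (by decide : ({0}:Finset (Fin 3)) ∉ ({{0,1},{0,2},{0,1,2}} : Finset (Finset (Fin 3)))),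
      Finset.sum_insert (by decide : ({0,1}:Finset (Fin 3)) ∉ ({{0,2},{0,1,2}} : Finset (Finset (Fin 3)))),
      Finset.sum_insert (by decide : ({0,2}:Finset (Fin 3)) ∉ ({{0,1,2}} : Finset (Finset (Fin 3)))),
      Finset.sum_singleton] at h
    rw [show ptri {0} = 0 from by simp [ptri], show ptri {0,1} = 1/3 from by simp [ptri],
        show ptri {0,2} = 1/3 from by simp [ptri], show ptri {0,1,2} = 0 from by simp [ptri]] at h
    rw [Finset.sum_pair (by decide : (0:Fin 3) ≠ 1), Finset.sum_pair (by decide : (0:Fin 3) ≠ 2)] at h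
    ring_nf at h ⊢
    linarith [h]
  have h1fr : v 1 = 1/3 * (v 1 ^ α / (v 0 ^ α + v 1 ^ α)) + 1/3 * (v 1 ^ α / (v 1 ^ α + v 2 ^ α)) := by
    have h := heq 1
    rw [warmF] at h
    rw [show (Finset.univ.filter (fun A : Finset (Fin 3) => (1:Fin 3) ∈ A))
        = {{1},{0,1},{1,2},{0,1,2}} from by decide] at h
    simp only [Finset.sum_insert (by decide : ({1}:Finset (Fin 3)) ∉ ({{0,1},{1,2},{0,1,2}} : Finset (Finset (Fin 3)))),
      Finset.sum_insert (by decide : ({0,1}:Finset (Fin 3)) ∉ ({{1,2},{0,1,2}} : Finset (Finset (Fin 3)))),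
      Finset.sum_insert (by decide : ({1,2}:Finset (Fin 3)) ∉ ({{0,1,2}} : Finset (Finset (Fin 3)))),
      Finset.sum_singleton] at h
    rw [show ptri {1} = 0 from by simp [ptri], show ptri {0,1} = 1/3 from by simp [ptri],
        show ptri {1,2} = 1/3 from by simp [ptri], show ptri {0,1,2} = 0 from by simp [ptri]] at h
    rw [Finset.sum_pair (by decide : (0:Fin 3) ≠ 1), Finset.sum_pair (by decide : (1:Fin 3) ≠ 2)] at h
    ring_nf at h ⊢
    linarith [h]
  have h2fr : v 2 = 1/3 * (v 2 ^ α / (v 0 ^ α + v 2 ^ α)) + 1/3 * (v 2 ^ α / (v 1 ^ α + v 2 ^ α)) := by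
    have h := heq 2
    rw [warmF] at h
    rw [show (Finset.univ.filter (fun A : Finset (Fin 3) => (2:Fin 3) ∈ A))
        = {{2},{0,2},{1,2},{0,1,2}} from by decide] at h
    simp only [Finset.sum_insert (by decide : ({2}:Finset (Fin 3)) ∉ ({{0,2},{1,2},{0,1,2}} : Finset (Finset (Fin 3)))),
      Finset.sum_insert (by decide : ({0,2}:Finset (Fin 3)) ∉ ({{1,2},{0,1,2}} : Finset (Finset (Fin 3)))),
      Finset.sum_insert (by decide : ({1,2}:Finset (Fin 3)) ∉ ({{0,1,2}} : Finset (Finset (Fin 3)))),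
      Finset.sum_singleton] at h
    rw [show ptri {2} = 0 from by simp [ptri], show ptri {0,2} = 1/3 from by simp [ptri],
        show ptri {1,2} = 1/3 from by simp [ptri], show ptri {0,1,2} = 0 from by simp [ptri]] at h
    rw [Finset.sum_pair (by decide : (0:Fin 3) ≠ 2), Finset.sum_pair (by decide : (1:Fin 3) ≠ 2)] at h
    ring_nf at h ⊢
    linarith [h]
  -- rpow basics
  have hXa : v 0 ^ (1-α) * v 0 ^ α = v 0 := by
    rw [← Real.rpow_add hx, show (1-α)+α = 1 by ring, Real.rpow_one]
  have hYb : v 1 ^ (1-α) * v 1 ^ α = v 1 := by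
    rw [← Real.rpow_add hy, show (1-α)+α = 1 by ring, Real.rpow_one]
  have hZc : v 2 ^ (1-α) * v 2 ^ α = v 2 := by
    rw [← Real.rpow_add hz, show (1-α)+α = 1 by ring, Real.rpow_one]
  have hab : v 0 ^ α + v 1 ^ α ≠ 0 := ne_of_gt (by linarith)
  have hac : v 0 ^ α + v 2 ^ α ≠ 0 := ne_of_gt (by linarith)
  have hbc : v 1 ^ α + v 2 ^ α ≠ 0 := ne_of_gt (by linarith)
  have h0' : 3*(v 0)*((v 0^α+v 1^α)*(v 0^α+v 2^α))
      = v 0^α*(v 0^α+v 2^α) + v 0^α*(v 0^α+v 1^α) := by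
    field_simp at h0fr
    linear_combination h0fr
  have h1' : 3*(v 1)*((v 0^α+v 1^α)*(v 1^α+v 2^α))
      = v 1^α*(v 1^α+v 2^α) + v 1^α*(v 0^α+v 1^α) := by
    field_simp at h1fr
    linear_combination h1fr
  have h2' : 3*(v 2)*((v 0^α+v 2^α)*(v 1^α+v 2^α))
      = v 2^α*(v 1^α+v 2^α) + v 2^α*(v 0^α+v 2^α) := by
    field_simp at h2fr
    linear_combination h2fr
  have hE0 : 3*(v 0^(1-α))*((v 0^α+v 1^α)*(v 0^α+v 2^α)) = 2*v 0^α+v 1^α+v 2^α := by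
    apply mul_right_cancel₀ ha.ne'
    linear_combination 3*((v 0^α+v 1^α)*(v 0^α+v 2^α))*hXa + h0'
  have hE1 : 3*(v 1^(1-α))*((v 0^α+v 1^α)*(v 1^α+v 2^α)) = v 0^α+2*v 1^α+v 2^α := by
    apply mul_right_cancel₀ hb.ne'
    linear_combination 3*((v 0^α+v 1^α)*(v 1^α+v 2^α))*hYb + h1'
  have hE2 : 3*(v 2^(1-α))*((v 0^α+v 2^α)*(v 1^α+v 2^α)) = v 0^α+v 1^α+2*v 2^α := by
    apply mul_right_cancel₀ hc.ne'
    linear_combination 3*((v 0^α+v 2^α)*(v 1^α+v 2^α))*hZc + h2'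
  exact mainlem hα1 hα2 hz h32 hyx hsum hE0 hE1 hE2

end
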